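/- arXiv:2507.16415 — 3 statements merged into one kernel-verified Lean document; each statement's English description precedes it below -/
import Mathlib

section
/- Let a, b, f, g > 0 and c, d ∈ ℝ, and suppose a·b² < (3√3/4)·(f²/g). Then the function P : ℝ² → ℝ defined by P(x₁,x₂) := ½(x₁² + x₂²) + (g/f²)·(a·tanh(b·(x₂ − c)) + d) is strictly convex on ℝ². -/
lemma aux_hasDerivAt_tanh (x : ℝ) : HasDerivAt Real.tanh ((Real.cosh x ^ 2)⁻¹) x := by
  have hne := (Real.cosh_pos x).ne'
  have h := (Real.hasDerivAt_sinh x).div (Real.hasDerivAt_cosh x) hne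
  have heq : Real.tanh = fun y => Real.sinh y / Real.cosh y :=
    funext fun y => Real.tanh_eq_sinh_div_cosh y
  rw [heq]
  refine h.congr_deriv ?_
  have h2 := Real.cosh_sq_sub_sinh_sq x
  field_simp
  nlinarith [h2]

lemma aux_key (u : ℝ) :
    Real.sinh u * Real.cosh u * (3 * Real.sqrt 3) ≤ 2 * Real.cosh u ^ 4 := by
  set S := Real.sinh u
  set C := Real.cosh u with hCdef
  have hC : 0 < C := Real.cosh_pos u
  have h1 : C ^ 2 = S ^ 2 + 1 := Real.cosh_sq u
  have hs3 : Real.sqrt 3 ^ 2 = 3 := Real.sq_sqrt (by norm_num)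
  have hs3pos : 0 < Real.sqrt 3 := Real.sqrt_pos.2 (by norm_num)
  have h2 : 0 ≤ Real.sqrt 3 * S + 2 * C := by
    nlinarith [sq_nonneg (Real.sqrt 3 * S + 2 * C), sq_nonneg (Real.sqrt 3 * S - 2 * C), sq_nonneg S]
  have h3 : C * (Real.sqrt 3 * S - C) ^ 2 * (Real.sqrt 3 * S + 2 * C)
      = 2 * C ^ 4 - 3 * Real.sqrt 3 * S * C := by
    linear_combination Real.sqrt 3 * S ^ 3 * C * hs3 - 3 * Real.sqrt 3 * S * C * h1
  have h4 : 0 ≤ C * (Real.sqrt 3 * S - C) ^ 2 * (Real.sqrt 3 * S + 2 * C) :=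
    mul_nonneg (mul_nonneg hC.le (sq_nonneg _)) h2
  linarith

lemma aux_1d (a b c d f g : ℝ) (ha : 0 < a) (hb : 0 < b) (hf : 0 < f) (hg : 0 < g)
    (h : a * b ^ 2 < 3 * Real.sqrt 3 / 4 * (f ^ 2 / g)) :
    StrictConvexOn ℝ (Set.univ : Set ℝ)
      (fun s : ℝ => s ^ 2 / 2 + g / f ^ 2 * (a * Real.tanh (b * (s - c)) + d)) := by
  set F : ℝ → ℝ := fun s => s ^ 2 / 2 + g / f ^ 2 * (a * Real.tanh (b * (s - c)) + d) with hF
  set G : ℝ → ℝ := fun s => s + g / f ^ 2 * a * b * (Real.cosh (b * (s - c)) ^ 2)⁻¹ with hG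
  have hinner : ∀ s : ℝ, HasDerivAt (fun s : ℝ => b * (s - c)) b s := by
    intro s
    simpa using ((hasDerivAt_id s).sub_const c).const_mul b
  have hF' : ∀ s : ℝ, HasDerivAt F (G s) s := by
    intro s
    have h1 : HasDerivAt (fun s : ℝ => s ^ 2 / 2) s s := by
      simpa using (hasDerivAt_pow 2 s).div_const 2
    have h2 : HasDerivAt (fun s : ℝ => Real.tanh (b * (s - c)))
        ((Real.cosh (b * (s - c)) ^ 2)⁻¹ * b) s :=
      by have := (aux_hasDerivAt_tanh (b * (s - c))).comp s (hinner s); exact this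
    have h3 := h1.add (((h2.const_mul a).add_const d).const_mul (g / f ^ 2))
    refine h3.congr_deriv ?_
    simp [hG]; ring
  have hDF : deriv F = G := funext fun s => (hF' s).deriv
  have hG' : ∀ s : ℝ, HasDerivAt G
      (1 - g / f ^ 2 * a * b ^ 2 *
        (2 * Real.sinh (b * (s - c)) * Real.cosh (b * (s - c))) / (Real.cosh (b * (s - c)) ^ 2) ^ 2) s := by
    intro s
    have hc : HasDerivAt (fun s : ℝ => Real.cosh (b * (s - c))) (Real.sinh (b * (s - c)) * b) s :=
      by have := (Real.hasDerivAt_cosh (b * (s - c))).comp s (hinner s); exact this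
    have hsq : HasDerivAt (fun s : ℝ => Real.cosh (b * (s - c)) ^ 2)
        ((2 : ℕ) * Real.cosh (b * (s - c)) ^ 1 * (Real.sinh (b * (s - c)) * b)) s := hc.pow 2
    have hne : Real.cosh (b * (s - c)) ^ 2 ≠ 0 := by positivity
    have hinv := hsq.inv hne
    have := (hasDerivAt_id s).add (hinv.const_mul (g / f ^ 2 * a * b))
    refine this.congr_deriv ?_
    have hCne : Real.cosh (b * (s - c)) ≠ 0 := (Real.cosh_pos _).ne'
    field_simp
    ring
  have hD2 : ∀ s : ℝ, 0 < deriv^[2] F s := by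
    intro s
    have : deriv^[2] F s = deriv G s := by
      simp [Function.iterate_succ, hDF]
    rw [this, (hG' s).deriv]
    set S := Real.sinh (b * (s - c))
    set C := Real.cosh (b * (s - c))
    have hC : 0 < C := Real.cosh_pos _
    have hkey : S * C * (3 * Real.sqrt 3) ≤ 2 * C ^ 4 := aux_key _
    have hs3pos : 0 < Real.sqrt 3 := Real.sqrt_pos.2 (by norm_num)
    have hk : g / f ^ 2 * a * b ^ 2 < 3 * Real.sqrt 3 / 4 := by
      have h2 := mul_lt_mul_of_pos_left h (by positivity : (0:ℝ) < g / f ^ 2)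
      calc g / f ^ 2 * a * b ^ 2 = g / f ^ 2 * (a * b ^ 2) := by ring
        _ < g / f ^ 2 * (3 * Real.sqrt 3 / 4 * (f ^ 2 / g)) := h2
        _ = 3 * Real.sqrt 3 / 4 := by field_simp
    have hkpos : 0 < g / f ^ 2 * a * b ^ 2 := by positivity
    set k := g / f ^ 2 * a * b ^ 2
    set Q := (C ^ 2) ^ 2 with hQ
    have hQpos : 0 < Q := by positivity
    have hX : 2 * S * C / Q ≤ 4 / (3 * Real.sqrt 3) := by
      rw [div_le_div_iff₀ hQpos (by positivity)]
      nlinarith [hkey]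
    rcases le_or_gt (2 * S * C / Q) 0 with hXn | hXp
    · have : k * (2 * S * C) / Q ≤ 0 := by
        rw [mul_div_assoc]
        exact mul_nonpos_of_nonneg_of_nonpos hkpos.le hXn
      linarith
    · have h5 : k * (2 * S * C / Q) < 3 * Real.sqrt 3 / 4 * (2 * S * C / Q) :=
        mul_lt_mul_of_pos_right hk hXp
      have h6 : 3 * Real.sqrt 3 / 4 * (2 * S * C / Q) ≤ 3 * Real.sqrt 3 / 4 * (4 / (3 * Real.sqrt 3)) :=
        mul_le_mul_of_nonneg_left hX (by positivity)
      have h7 : 3 * Real.sqrt 3 / 4 * (4 / (3 * Real.sqrt 3)) = 1 := by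
        field_simp
      have : k * (2 * S * C) / Q < 1 := by
        rw [mul_div_assoc]; linarith
      linarith
  have hcont : Continuous F := by
    have : Continuous Real.tanh := by
      have heq : Real.tanh = fun y => Real.sinh y / Real.cosh y :=
        funext fun y => Real.tanh_eq_sinh_div_cosh y
      rw [heq]
      exact Real.continuous_sinh.div Real.continuous_cosh fun x => (Real.cosh_pos x).ne'
    fun_prop
  exact strictConvexOn_univ_of_deriv2_pos hcont hD2

lemma aux_sum {u v : ℝ → ℝ} (hu : StrictConvexOn ℝ Set.univ u) (hv : StrictConvexOn ℝ Set.univ v) :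
    StrictConvexOn ℝ (Set.univ : Set (EuclideanSpace ℝ (Fin 2)))
      (fun x : EuclideanSpace ℝ (Fin 2) => u (x 0) + v (x 1)) := by
  refine ⟨convex_univ, ?_⟩
  intro x _ y _ hxy p q hp hq hpq
  have heval : ∀ i, (p • x + q • y) i = p * x i + q * y i := fun i => rfl
  simp only [heval, smul_eq_mul]
  have hne : x 0 ≠ y 0 ∨ x 1 ≠ y 1 := by
    by_contra hcon
    push_neg at hcon
    apply hxy
    ext i
    fin_cases i
    · exact hcon.1
    · exact hcon.2
  rcases hne with h0 | h1
  · have hu' := hu.2 (Set.mem_univ (x 0)) (Set.mem_univ (y 0)) h0 hp hq hpq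
    have hv' := hv.convexOn.2 (Set.mem_univ (x 1)) (Set.mem_univ (y 1)) hp.le hq.le hpq
    simp only [smul_eq_mul] at hu' hv'
    linarith
  · have hu' := hu.convexOn.2 (Set.mem_univ (x 0)) (Set.mem_univ (y 0)) hp.le hq.le hpq
    have hv' := hv.2 (Set.mem_univ (x 1)) (Set.mem_univ (y 1)) h1 hp hq hpq
    simp only [smul_eq_mul] at hu' hv'
    linarith

lemma aux_half_sq : StrictConvexOn ℝ (Set.univ : Set ℝ) (fun s : ℝ => s ^ 2 / 2) := by
  refine ⟨convex_univ, ?_⟩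
  intro x _ y _ hxy p q hp hq hpq
  simp only [smul_eq_mul]
  have hxy2 : (0:ℝ) < (x - y) ^ 2 := by
    have := sub_ne_zero.2 hxy
    positivity
  nlinarith [mul_pos hp hq]

/-- Let `a, b, f, g > 0` and `c, d ∈ ℝ`, and suppose
`a·b² < (3√3/4)·(f²/g)`.  Then the function `P : ℝ² → ℝ` defined by
`P(x₁,x₂) := ½(x₁² + x₂²) + (g/f²)·(a·tanh(b·(x₂ − c)) + d)` is strictly convex on ℝ². -/
theorem stmt_6 (a b c d f g : ℝ) (ha : 0 < a) (hb : 0 < b) (hf : 0 < f) (hg : 0 < g)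
    (h : a * b ^ 2 < 3 * Real.sqrt 3 / 4 * (f ^ 2 / g)) :
    StrictConvexOn ℝ (Set.univ : Set (EuclideanSpace ℝ (Fin 2)))
      (fun x : EuclideanSpace ℝ (Fin 2) =>
        (x 0 ^ 2 + x 1 ^ 2) / 2 + g / f ^ 2 * (a * Real.tanh (b * (x 1 - c)) + d)) := by
  have key := aux_sum aux_half_sq (aux_1d a b c d f g ha hb hf hg h)
  convert key using 2 with x
  ring
end

section
/- Let ε > 0 and let (φ_ε, ψ_ε) be a maximizer of the entropic dual functional D_{σ,ε}. Then: (a) for σ-almost every y, ψ_ε(y) = −ε·log ∫_Ω exp((φ_ε(x) − ½‖x−y‖²)/ε) dμ(x); (b) for μ-almost every x, φ_ε(x) < 0 and −(f²/g)·φ_ε(x) = exp(φ_ε(x)/ε)·∫ exp((ψ_ε(y) − ½‖x−y‖²)/ε) dσ(y); and consequently (c) the measure γ_ε on Ω×ℝ² with density exp((φ_ε(x)+ψ_ε(y)−½‖x−y‖²)/ε) with respect to μ⊗σ has second marginal σ and first marginal h_ε·μ, where h_ε := −(f²/g)·φ_ε. -/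
open MeasureTheory

/-- The (topological) support of a Borel measure: the set of points all of whose
neighbourhoods have positive measure. -/
def msupport (σ : Measure (EuclideanSpace ℝ (Fin 2))) : Set (EuclideanSpace ℝ (Fin 2)) :=
  { y | ∀ U ∈ nhds y, 0 < σ U }

/-- Admissible pairs for the entropic dual problem: `φ` continuous on `Ω` and `ψ`
continuous on the support of `σ`. -/
def EntAdmissible (Ω : Set (EuclideanSpace ℝ (Fin 2)))
    (σ : Measure (EuclideanSpace ℝ (Fin 2)))
    (φ ψ : EuclideanSpace ℝ (Fin 2) → ℝ) : Prop :=
  ContinuousOn φ Ω ∧ ContinuousOn ψ (msupport σ)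

/-- The entropic dual functional
`D_{σ,ε}(φ,ψ) := ∫ ψ dσ − (f²/(2g)) ∫ φ² dμ
  − ε ∫∫ (exp((φ(x)+ψ(y)−½‖x−y‖²)/ε) − 1) dμ(x) dσ(y)`. -/
noncomputable def Dse (μ σ : Measure (EuclideanSpace ℝ (Fin 2))) (f g ε : ℝ)
    (φ ψ : EuclideanSpace ℝ (Fin 2) → ℝ) : ℝ :=
  (∫ y, ψ y ∂σ) - f ^ 2 / (2 * g) * (∫ x, φ x ^ 2 ∂μ)
    - ε * ∫ p, (Real.exp ((φ p.1 + ψ p.2 - ‖p.1 - p.2‖ ^ 2 / 2) / ε) - 1) ∂(μ.prod σ)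

noncomputable abbrev E2 := EuclideanSpace ℝ (Fin 2)


lemma aux_squeeze (a b K t₀ : ℝ) (ht₀ : 0 < t₀) (hK : 0 ≤ K)
    (h : ∀ t : ℝ, 0 < t → t ≤ t₀ → t * a ≤ t * b + t ^ 2 * K)
    (h' : ∀ t : ℝ, 0 < t → t ≤ t₀ → t * b ≤ t * a + t ^ 2 * K) : a = b := by
  have key : ∀ t : ℝ, 0 < t → t ≤ t₀ → |a - b| ≤ t * K := by
    intro t ht ht'
    have h1 := h t ht ht'
    have h2 := h' t ht ht'
    rw [abs_le]
    constructor <;> nlinarith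
  by_contra hne
  have habs : 0 < |a - b| := by
    rw [abs_pos]; exact sub_ne_zero_of_ne hne
  have hK1 : 0 < K + 1 := by linarith
  set t := min t₀ (|a - b| / (2 * (K + 1))) with htdef
  have ht : 0 < t := lt_min ht₀ (by positivity)
  have := key t ht (min_le_left _ _)
  have htle : t ≤ |a - b| / (2 * (K + 1)) := min_le_right _ _
  have : |a - b| ≤ (|a - b| / (2 * (K + 1))) * K := by
    calc |a - b| ≤ t * K := this
    _ ≤ (|a - b| / (2 * (K + 1))) * K := by
        apply mul_le_mul_of_nonneg_right htle hK
  have hd : (|a - b| / (2 * (K + 1))) * K < |a - b| := by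
    rw [div_mul_eq_mul_div, div_lt_iff₀ (by linarith)]
    nlinarith
  linarith

lemma msupport_isClosed (σ : Measure E2) : IsClosed (msupport σ) := by
  rw [← isOpen_compl_iff, isOpen_iff_mem_nhds]
  intro y hy
  simp only [msupport, Set.mem_compl_iff, Set.mem_setOf_eq, not_forall] at hy
  obtain ⟨U, hU, hU0⟩ := hy
  have hU0 : σ U = 0 := by
    simpa using hU0
  obtain ⟨V, hVU, hVopen, hyV⟩ := mem_nhds_iff.1 hU
  filter_upwards [hVopen.mem_nhds hyV] with z hz
  simp only [msupport, Set.mem_compl_iff, Set.mem_setOf_eq, not_forall]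
  refine ⟨V, hVopen.mem_nhds hz, ?_⟩
  simp [le_antisymm ((measure_mono hVU).trans hU0.le) zero_le]

lemma msupport_compl_null (σ : Measure E2) : σ (msupport σ)ᶜ = 0 := by
  set T : Set (Set E2) := {U ∈ TopologicalSpace.countableBasis E2 | σ U = 0} with hT
  have hTc : T.Countable := (TopologicalSpace.countable_countableBasis E2).mono
    (Set.sep_subset _ _)
  have hsub : (msupport σ)ᶜ ⊆ ⋃₀ T := by
    intro y hy
    simp only [msupport, Set.mem_compl_iff, Set.mem_setOf_eq, not_forall] at hy
    obtain ⟨U, hU, hU0⟩ := hy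
    have hU0 : σ U = 0 := by simpa using hU0
    obtain ⟨V, hVmem, hyV, hVU⟩ :=
      (TopologicalSpace.isBasis_countableBasis E2).mem_nhds_iff.1 hU
    exact ⟨V, ⟨hVmem, le_antisymm ((measure_mono hVU).trans hU0.le) zero_le⟩, hyV⟩
  exact measure_mono_null hsub ((measure_sUnion_null_iff hTc).2 fun U hU => hU.2)

lemma tietze_clamped {s : Set E2} (hs : IsClosed s) (d : E2 → ℝ) (hd : ContinuousOn d s)
    (C : ℝ) (hC0 : 0 ≤ C) (hC : ∀ x ∈ s, |d x| ≤ C) :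
    ∃ η : E2 → ℝ, Continuous η ∧ (∀ x ∈ s, η x = d x) ∧ ∀ x, |η x| ≤ C := by
  obtain ⟨gg, hgg⟩ := ContinuousMap.exists_restrict_eq (Y := ℝ) hs
    ⟨s.restrict d, hd.restrict⟩
  refine ⟨fun x => max (-C) (min C (gg x)), ?_, ?_, ?_⟩
  · exact continuous_const.max (continuous_const.min gg.continuous)
  · intro x hx
    have hgx : gg x = d x := by
      have := congrFun (congrArg DFunLike.coe hgg) ⟨x, hx⟩
      exact this
    show max (-C) (min C (gg x)) = d x
    rw [hgx]
    rcases abs_le.1 (hC x hx) with ⟨h1, h2⟩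
    rw [min_eq_right h2, max_eq_right h1]
  · intro x
    rw [abs_le]
    constructor
    · exact le_max_left _ _
    · exact max_le (by linarith) (min_le_left _ _)

lemma weak_ae_zero {ν : Measure E2} [IsFiniteMeasure ν] {s : Set E2} (hcpt : IsCompact s)
    (hνs : ν sᶜ = 0) {d : E2 → ℝ} (hd : ContinuousOn d s)
    (h : ∀ η : E2 → ℝ, Continuous η → (∃ C, ∀ x, |η x| ≤ C) → ∫ x, η x * d x ∂ν = 0) :
    d =ᵐ[ν] 0 := by
  have hsm : MeasurableSet s := hcpt.isClosed.measurableSet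
  have haes : ∀ᵐ x ∂ν, x ∈ s := by
    rw [ae_iff]
    exact hνs
  -- bound for d on s
  obtain ⟨C₀, hC₀⟩ := hcpt.exists_bound_of_continuousOn hd
  set C : ℝ := max C₀ 0 with hCdef
  have hC0 : (0:ℝ) ≤ C := le_max_right _ _
  have hC : ∀ x ∈ s, |d x| ≤ C := fun x hx => (hC₀ x hx).trans (le_max_left _ _)
  obtain ⟨η, hηc, hηeq, hηbd⟩ := tietze_clamped hcpt.isClosed d hd C hC0 hC
  have hint : ∫ x, η x * d x ∂ν = 0 := h η hηc ⟨C, hηbd⟩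
  -- d is a.e. measurable
  have hrest : ν.restrict s = ν := Measure.restrict_eq_self_of_ae_mem haes
  have hdm : AEMeasurable d ν := by
    have := hd.aemeasurable hsm (μ := ν)
    rwa [hrest] at this
  have heq : (fun x => η x * d x) =ᵐ[ν] fun x => d x ^ 2 := by
    filter_upwards [haes] with x hx
    rw [hηeq x hx]; ring
  have hint2 : ∫ x, d x ^ 2 ∂ν = 0 := by
    rw [← integral_congr_ae heq, hint]
  have hi : Integrable (fun x => d x ^ 2) ν := by
    refine Integrable.mono' (integrable_const (C ^ 2)) ((hdm.pow_const 2).aestronglyMeasurable) ?_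
    filter_upwards [haes] with x hx
    rw [Real.norm_eq_abs, abs_pow]
    exact pow_le_pow_left₀ (abs_nonneg _) (hC x hx) 2
  have := (integral_eq_zero_iff_of_nonneg_ae
    (Filter.Eventually.of_forall fun x => sq_nonneg (d x)) hi).1 hint2
  filter_upwards [this] with x hx
  exact pow_eq_zero_iff two_ne_zero |>.1 hx



set_option maxHeartbeats 1000000 in
/-- Optimality conditions for a maximizer `(φ_ε, ψ_ε)` of the entropic
dual functional `D_{σ,ε}`:
(a) for `σ`-a.e. `y`, `ψ_ε(y) = −ε·log ∫ exp((φ_ε(x) − ½‖x−y‖²)/ε) dμ(x)`;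
(b) for `μ`-a.e. `x`, `φ_ε(x) < 0` and
    `−(f²/g)·φ_ε(x) = exp(φ_ε(x)/ε)·∫ exp((ψ_ε(y) − ½‖x−y‖²)/ε) dσ(y)`;
(c) the measure `γ_ε` with density `exp((φ_ε(x)+ψ_ε(y)−½‖x−y‖²)/ε)` w.r.t. `μ⊗σ` has
    second marginal `σ` and first marginal `h_ε·μ` with `h_ε := −(f²/g)·φ_ε`. -/
theorem stmt_8
    (Ω : Set (EuclideanSpace ℝ (Fin 2)))
    (hΩcpt : IsCompact Ω) (hΩconv : Convex ℝ Ω) (hΩint : (interior Ω).Nonempty)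
    (μ : Measure (EuclideanSpace ℝ (Fin 2)))
    (hμ : μ = (volume Ω)⁻¹ • volume.restrict Ω)
    (f g : ℝ) (hf : 0 < f) (hg : 0 < g)
    (σ : Measure (EuclideanSpace ℝ (Fin 2))) [IsProbabilityMeasure σ]
    (hσ : ∃ K, IsCompact K ∧ σ Kᶜ = 0)
    (ε : ℝ) (hε : 0 < ε)
    (φε ψε : EuclideanSpace ℝ (Fin 2) → ℝ)
    (hadm : EntAdmissible Ω σ φε ψε)
    (hmax : ∀ φ ψ, EntAdmissible Ω σ φ ψ → Dse μ σ f g ε φ ψ ≤ Dse μ σ f g ε φε ψε) :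
    (∀ᵐ y ∂σ, ψε y =
        -ε * Real.log (∫ x, Real.exp ((φε x - ‖x - y‖ ^ 2 / 2) / ε) ∂μ)) ∧
    (∀ᵐ x ∂μ, φε x < 0 ∧
        -(f ^ 2 / g) * φε x =
          Real.exp (φε x / ε) * ∫ y, Real.exp ((ψε y - ‖x - y‖ ^ 2 / 2) / ε) ∂σ) ∧
    (((μ.prod σ).withDensity fun p =>
        ENNReal.ofReal (Real.exp ((φε p.1 + ψε p.2 - ‖p.1 - p.2‖ ^ 2 / 2) / ε))).map
          Prod.snd = σ ∧
     ((μ.prod σ).withDensity fun p =>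
        ENNReal.ofReal (Real.exp ((φε p.1 + ψε p.2 - ‖p.1 - p.2‖ ^ 2 / 2) / ε))).map
          Prod.fst = μ.withDensity fun x => ENNReal.ofReal (-(f ^ 2 / g) * φε x)) := by
  classical
  obtain ⟨K, hKcpt, hσK⟩ := hσ
  -- basic facts about Ω and μ
  have hΩm : MeasurableSet Ω := hΩcpt.isClosed.measurableSet
  have hvolΩ_pos : 0 < volume Ω := by
    obtain ⟨x, hx⟩ := hΩint
    have : volume (interior Ω) ≠ 0 := (isOpen_interior.measure_ne_zero volume ⟨x, hx⟩)
    exact lt_of_lt_of_le (pos_iff_ne_zero.2 this) (measure_mono interior_subset)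
  have hvolΩ_ne_top : volume Ω ≠ ⊤ := hΩcpt.measure_ne_top
  haveI hμprob : IsProbabilityMeasure μ := by
    constructor
    rw [hμ]
    simp [Measure.restrict_apply_univ]
    rw [ENNReal.inv_mul_cancel hvolΩ_pos.ne' hvolΩ_ne_top]
  have hμΩc : μ Ωᶜ = 0 := by
    rw [hμ]
    simp [Measure.restrict_apply hΩm.compl]
  have haeΩ : ∀ᵐ x ∂μ, x ∈ Ω := by
    rw [ae_iff]; exact hμΩc
  have hrestμ : μ.restrict Ω = μ := Measure.restrict_eq_self_of_ae_mem haeΩ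
  -- support of σ
  set S : Set E2 := msupport σ with hSdef
  have hSclosed : IsClosed S := msupport_isClosed σ
  have hSnull : σ Sᶜ = 0 := msupport_compl_null σ
  have haeS : ∀ᵐ y ∂σ, y ∈ S := by
    rw [ae_iff]; exact hSnull
  have hSK : S ⊆ K := by
    intro y hy
    by_contra hyK
    have := hy Kᶜ (hKcpt.isClosed.isOpen_compl.mem_nhds hyK)
    rw [hσK] at this
    exact lt_irrefl 0 this
  have hScpt : IsCompact S := hKcpt.of_isClosed_subset hSclosed hSK
  have hrestσ : σ.restrict S = σ := Measure.restrict_eq_self_of_ae_mem haeS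
  -- bounds
  obtain ⟨A, hA⟩ := hΩcpt.exists_bound_of_continuousOn hadm.1
  have hA0 : 0 ≤ A := by
    obtain ⟨x, hx⟩ := hΩint
    exact (norm_nonneg _).trans (hA x (interior_subset hx))
  obtain ⟨B₀, hB₀⟩ := hScpt.exists_bound_of_continuousOn hadm.2
  set B : ℝ := max B₀ 0 with hBdef
  have hB0 : 0 ≤ B := le_max_right _ _
  have hB : ∀ y ∈ S, |ψε y| ≤ B := fun y hy => (hB₀ y hy).trans (le_max_left _ _)
  -- bound for the cost on Ω × K
  obtain ⟨r₁, hr₁⟩ := hΩcpt.isBounded.subset_closedBall 0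
  obtain ⟨r₂, hr₂⟩ := hKcpt.isBounded.subset_closedBall 0
  set R : ℝ := (|r₁| + |r₂|) ^ 2 / 2 with hRdef
  have hR0 : 0 ≤ R := by positivity
  have hcost : ∀ x ∈ Ω, ∀ y ∈ K, ‖x - y‖ ^ 2 / 2 ≤ R := by
    intro x hx y hy
    have h1 : ‖x‖ ≤ |r₁| := le_trans (by simpa using hr₁ hx) (le_abs_self _)
    have h2 : ‖y‖ ≤ |r₂| := le_trans (by simpa using hr₂ hy) (le_abs_self _)
    have : ‖x - y‖ ≤ |r₁| + |r₂| := (norm_sub_le _ _).trans (add_le_add h1 h2)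
    rw [hRdef]
    have h3 : ‖x - y‖ ^ 2 ≤ (|r₁| + |r₂|) ^ 2 :=
      pow_le_pow_left₀ (norm_nonneg _) this 2
    linarith
  -- measurability
  have aemφ : AEMeasurable φε μ := by
    have := hadm.1.aemeasurable hΩm (μ := μ)
    rwa [hrestμ] at this
  have aemψ : AEMeasurable ψε σ := by
    have := hadm.2.aemeasurable hSclosed.measurableSet (μ := σ)
    rwa [hrestσ] at this
  haveI : IsProbabilityMeasure (μ.prod σ) := by infer_instance
  have hqmpf : Measure.QuasiMeasurePreserving (Prod.fst : E2 × E2 → E2) (μ.prod σ) μ :=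
    Measure.quasiMeasurePreserving_fst
  have hqmps : Measure.QuasiMeasurePreserving (Prod.snd : E2 × E2 → E2) (μ.prod σ) σ :=
    Measure.quasiMeasurePreserving_snd
  -- the density E
  set E : E2 × E2 → ℝ := fun p => Real.exp ((φε p.1 + ψε p.2 - ‖p.1 - p.2‖ ^ 2 / 2) / ε)
    with hEdef
  have aemE : AEMeasurable E (μ.prod σ) := by
    apply Real.measurable_exp.comp_aemeasurable
    apply AEMeasurable.div_const
    apply AEMeasurable.sub
    · exact (aemφ.comp_quasiMeasurePreserving hqmpf).add
        (aemψ.comp_quasiMeasurePreserving hqmps)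
    · exact ((measurable_fst.sub measurable_snd).norm.pow measurable_const).aemeasurable.div_const 2
  have haeΩS : ∀ᵐ p ∂(μ.prod σ), p.1 ∈ Ω ∧ p.2 ∈ S :=
    (hqmpf.ae haeΩ).and (hqmps.ae haeS)
  set M : ℝ := Real.exp ((A + B) / ε) with hMdef
  have hEpos : ∀ p, 0 < E p := fun p => Real.exp_pos _
  have hEboundae : ∀ᵐ p ∂(μ.prod σ), E p ≤ M := by
    filter_upwards [haeΩS] with p hp
    obtain ⟨h1, h2⟩ := hp
    show Real.exp ((φε p.1 + ψε p.2 - ‖p.1 - p.2‖ ^ 2 / 2) / ε) ≤ Real.exp ((A + B) / ε)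
    apply Real.exp_le_exp.2
    have hφ : φε p.1 ≤ A := le_trans (le_abs_self _) (hA p.1 h1)
    have hψ : ψε p.2 ≤ B := le_trans (le_abs_self _) (hB p.2 h2)
    have hc : 0 ≤ ‖p.1 - p.2‖ ^ 2 / 2 := by positivity
    gcongr
    linarith
  have intE : Integrable E (μ.prod σ) := by
    refine Integrable.mono' (integrable_const M) aemE.aestronglyMeasurable ?_
    filter_upwards [hEboundae] with p hp
    rw [Real.norm_eq_abs, abs_of_pos (hEpos p)]
    exact hp
  have IE0 : 0 ≤ ∫ p, E p ∂(μ.prod σ) := integral_nonneg fun p => (hEpos p).le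
  have intψε : Integrable ψε σ := by
    refine Integrable.mono' (integrable_const B) aemψ.aestronglyMeasurable ?_
    filter_upwards [haeS] with y hy
    exact hB y hy
  -- integrability of bounded continuous functions
  have intcont : ∀ (ν : Measure E2) [IsProbabilityMeasure ν] (h : E2 → ℝ) (C : ℝ),
      Continuous h → (∀ y, |h y| ≤ C) → Integrable h ν := by
    intro ν _ h C hc hC
    exact Integrable.mono' (integrable_const C) hc.aestronglyMeasurable
      (Filter.Eventually.of_forall fun y => hC y)
  -- |exp s - 1| bound
  have hexpabs : ∀ s : ℝ, |Real.exp s - 1| ≤ Real.exp |s| + 1 := by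
    intro s
    calc |Real.exp s - 1| ≤ |Real.exp s| + |(1:ℝ)| := abs_sub _ _
      _ = |Real.exp s| + 1 := by norm_num
      _ ≤ Real.exp |s| + 1 := by
          rw [abs_of_pos (Real.exp_pos s)]
          exact add_le_add_left (Real.exp_le_exp.2 (le_abs_self s)) 1
  -- integrability of E * (exp (u ∘ coordinate) - 1)-type functions
  have intEmul : ∀ (u : E2 × E2 → ℝ) (Cu : ℝ), Continuous u → (∀ p, |u p| ≤ Cu) →
      Integrable (fun p => E p * u p) (μ.prod σ) := by
    intro u Cu hu hCu
    refine Integrable.mono' (integrable_const (M * Cu))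
      (aemE.aestronglyMeasurable.mul hu.aestronglyMeasurable) ?_
    filter_upwards [hEboundae] with p hp
    rw [Real.norm_eq_abs, abs_mul, abs_of_pos (hEpos p)]
    have h1 : 0 ≤ E p := (hEpos p).le
    have h2 := hCu p
    have h3 := (abs_nonneg (u p))
    nlinarith
  -- the central estimate
  have hest : ∀ (w : E2 × E2 → ℝ) (Cw : ℝ), Continuous w → (∀ p, |w p| ≤ Cw) →
      ∀ t : ℝ, |t| * Cw ≤ ε →
      |ε * (∫ p, E p * (Real.exp (t * w p / ε) - 1) ∂(μ.prod σ))
        - t * ∫ p, E p * w p ∂(μ.prod σ)|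
        ≤ t ^ 2 * (Cw ^ 2 / ε * ∫ p, E p ∂(μ.prod σ)) := by
    intro w Cw hw hCw t ht
    have hCw0 : 0 ≤ Cw := le_trans (abs_nonneg _) (hCw 0)
    have hexpbd : ∀ p, |Real.exp (t * w p / ε) - 1| ≤ Real.exp (|t| * Cw / ε) + 1 := by
      intro p
      refine (hexpabs _).trans ?_
      have : |t * w p / ε| ≤ |t| * Cw / ε := by
        rw [abs_div, abs_mul, abs_of_pos hε]
        gcongr
        exact hCw p
      exact add_le_add_left (Real.exp_le_exp.2 this) 1
    have int1 : Integrable (fun p => E p * (Real.exp (t * w p / ε) - 1)) (μ.prod σ) :=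
      intEmul _ (Real.exp (|t| * Cw / ε) + 1)
        ((Real.continuous_exp.comp ((continuous_const.mul hw).div_const ε)).sub
          continuous_const) hexpbd
    have int2 : Integrable (fun p => E p * w p) (μ.prod σ) := intEmul _ Cw hw hCw
    rw [← integral_const_mul, ← integral_const_mul, ← integral_sub
      (int1.const_mul ε) (int2.const_mul t)]
    rw [← Real.norm_eq_abs]
    refine le_trans (norm_integral_le_integral_norm _) ?_
    have hptw : ∀ p : E2 × E2, ‖ε * (E p * (Real.exp (t * w p / ε) - 1)) - t * (E p * w p)‖
        ≤ (t ^ 2 * (Cw ^ 2 / ε)) * E p := by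
      intro p
      rw [Real.norm_eq_abs]
      have hEp := (hEpos p).le
      have key : ε * (E p * (Real.exp (t * w p / ε) - 1)) - t * (E p * w p)
          = (ε * E p) * (Real.exp (t * w p / ε) - 1 - t * w p / ε) := by
        field_simp
      rw [key, abs_mul, abs_of_nonneg (by positivity : (0:ℝ) ≤ ε * E p)]
      have habs : |t * w p / ε| ≤ 1 := by
        rw [abs_div, abs_mul, abs_of_pos hε, div_le_one hε]
        calc |t| * |w p| ≤ |t| * Cw := by gcongr; exact hCw p
          _ ≤ ε := ht
      have hquad := Real.abs_exp_sub_one_sub_id_le habs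
      calc ε * E p * |Real.exp (t * w p / ε) - 1 - t * w p / ε|
          ≤ ε * E p * (t * w p / ε) ^ 2 := by gcongr
        _ ≤ ε * E p * ((t ^ 2 * Cw ^ 2) / ε ^ 2) := by
            have hw2 : (w p) ^ 2 ≤ Cw ^ 2 := by
              nlinarith [hCw p, abs_nonneg (w p), neg_abs_le (w p), le_abs_self (w p)]
            have : (t * w p / ε) ^ 2 ≤ (t ^ 2 * Cw ^ 2) / ε ^ 2 := by
              rw [div_pow, mul_pow]
              gcongr
            gcongr
        _ = (t ^ 2 * (Cw ^ 2 / ε)) * E p := by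
            field_simp
    calc ∫ p, ‖ε * (E p * (Real.exp (t * w p / ε) - 1)) - t * (E p * w p)‖ ∂(μ.prod σ)
        ≤ ∫ p, (t ^ 2 * (Cw ^ 2 / ε)) * E p ∂(μ.prod σ) := by
          refine integral_mono_ae ?_ (intE.const_mul _) (Filter.Eventually.of_forall hptw)
          exact ((int1.const_mul ε).sub (int2.const_mul t)).norm
      _ = t ^ 2 * (Cw ^ 2 / ε * ∫ p, E p ∂(μ.prod σ)) := by
          rw [integral_const_mul]
          ring
  have hEapp : ∀ p : E2 × E2,
      Real.exp ((φε p.1 + ψε p.2 - ‖p.1 - p.2‖ ^ 2 / 2) / ε) = E p := fun p => rfl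
  set IE := ∫ p, E p ∂(μ.prod σ) with hIEdef
  -- the key variational identity in ψ
  have keyψ : ∀ η : E2 → ℝ, Continuous η → (∃ C, ∀ y, |η y| ≤ C) →
      ∫ y, η y ∂σ = ∫ p, E p * η p.2 ∂(μ.prod σ) := by
    rintro η hηc ⟨C₀, hC₀⟩
    have hC0 : 0 ≤ C₀ := le_trans (abs_nonneg _) (hC₀ 0)
    have intη : Integrable η σ := intcont σ η C₀ hηc hC₀
    have hwcont : Continuous (fun p : E2 × E2 => η p.2) := hηc.comp continuous_snd
    have hwbd : ∀ p : E2 × E2, |η p.2| ≤ C₀ := fun p => hC₀ p.2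
    have intEt : ∀ t : ℝ,
        Integrable (fun p => E p * (Real.exp (t * η p.2 / ε) - 1)) (μ.prod σ) := by
      intro t
      refine intEmul _ (Real.exp (|t| * C₀ / ε) + 1)
        ((Real.continuous_exp.comp ((continuous_const.mul hwcont).div_const ε)).sub
          continuous_const) ?_
      intro p
      refine (hexpabs _).trans ?_
      have : |t * η p.2 / ε| ≤ |t| * C₀ / ε := by
        rw [abs_div, abs_mul, abs_of_pos hε]
        gcongr
        exact hwbd p
      exact add_le_add_left (Real.exp_le_exp.2 this) 1
    have hineq : ∀ t : ℝ, t * ∫ y, η y ∂σ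
        ≤ ε * ∫ p, E p * (Real.exp (t * η p.2 / ε) - 1) ∂(μ.prod σ) := by
      intro t
      have hadm' : EntAdmissible Ω σ φε (fun y => ψε y + t * η y) :=
        ⟨hadm.1, hadm.2.add (continuous_const.mul hηc).continuousOn⟩
      have hle := hmax _ _ hadm'
      have h1 : ∫ y, (ψε y + t * η y) ∂σ = (∫ y, ψε y ∂σ) + t * ∫ y, η y ∂σ := by
        rw [integral_add intψε (intη.const_mul t), integral_const_mul]
      have hptw : ∀ p : E2 × E2,
          Real.exp ((φε p.1 + (ψε p.2 + t * η p.2) - ‖p.1 - p.2‖ ^ 2 / 2) / ε) - 1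
          = (E p - 1) + E p * (Real.exp (t * η p.2 / ε) - 1) := by
        intro p
        have harg : (φε p.1 + (ψε p.2 + t * η p.2) - ‖p.1 - p.2‖ ^ 2 / 2) / ε
            = (φε p.1 + ψε p.2 - ‖p.1 - p.2‖ ^ 2 / 2) / ε + t * η p.2 / ε := by
          field_simp
          ring
        rw [harg, Real.exp_add, hEapp p]
        ring
      have h2 : (∫ p, (Real.exp ((φε p.1 + (ψε p.2 + t * η p.2)
            - ‖p.1 - p.2‖ ^ 2 / 2) / ε) - 1) ∂(μ.prod σ))
          = (∫ p, (E p - 1) ∂(μ.prod σ))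
            + ∫ p, E p * (Real.exp (t * η p.2 / ε) - 1) ∂(μ.prod σ) := by
        calc (∫ p, (Real.exp ((φε p.1 + (ψε p.2 + t * η p.2)
              - ‖p.1 - p.2‖ ^ 2 / 2) / ε) - 1) ∂(μ.prod σ))
            = ∫ p, ((E p - 1) + E p * (Real.exp (t * η p.2 / ε) - 1)) ∂(μ.prod σ) :=
              integral_congr_ae (Filter.Eventually.of_forall fun p => hptw p)
          _ = _ := by
              refine integral_add ?_ (intEt t)
              exact intE.sub (integrable_const 1)
      rw [Dse, Dse] at hle
      simp only [hEapp] at hle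
      rw [h1, h2] at hle
      linarith
    set K₀ : ℝ := C₀ ^ 2 / ε * IE with hK₀def
    have hK₀0 : 0 ≤ K₀ := mul_nonneg (by positivity) IE0
    set t₀ : ℝ := ε / (C₀ + 1) with ht₀def
    have ht₀pos : 0 < t₀ := by positivity
    have htC : ∀ t : ℝ, 0 < t → t ≤ t₀ → |t| * C₀ ≤ ε := by
      intro t ht ht'
      rw [abs_of_pos ht]
      calc t * C₀ ≤ t₀ * C₀ := by gcongr
        _ ≤ ε := by
          rw [ht₀def, div_mul_eq_mul_div, div_le_iff₀ (by positivity)]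
          nlinarith
    refine aux_squeeze _ _ K₀ t₀ ht₀pos hK₀0 ?_ ?_
    · intro t ht ht'
      have h1 := hineq t
      have h2 := abs_le.1 (hest _ C₀ hwcont hwbd t (htC t ht ht'))
      rw [hK₀def]
      linarith [h2.2]
    · intro t ht ht'
      have h1 := hineq (-t)
      have h2 := abs_le.1 (hest _ C₀ hwcont hwbd (-t) (by rw [abs_neg]; exact htC t ht ht'))
      have hsq : (-t) ^ 2 = t ^ 2 := by ring
      rw [hsq] at h2
      rw [hK₀def]
      linarith [h2.2]
  -- the key variational identity in φ
  have intφε2 : Integrable (fun x => φε x ^ 2) μ := by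
    refine Integrable.mono' (integrable_const (A ^ 2)) ((aemφ.pow_const 2).aestronglyMeasurable) ?_
    filter_upwards [haeΩ] with x hx
    have h1 : |φε x| ≤ A := by rw [← Real.norm_eq_abs]; exact hA x hx
    rw [Real.norm_eq_abs, abs_pow]
    nlinarith [abs_nonneg (φε x)]
  have keyφ : ∀ η : E2 → ℝ, Continuous η → (∃ C, ∀ y, |η y| ≤ C) →
      -(f ^ 2 / g) * ∫ x, φε x * η x ∂μ = ∫ p, E p * η p.1 ∂(μ.prod σ) := by
    rintro η hηc ⟨C₀, hC₀⟩
    have hC0 : 0 ≤ C₀ := le_trans (abs_nonneg _) (hC₀ 0)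
    have intη : Integrable η μ := intcont μ η C₀ hηc hC₀
    have intη2 : Integrable (fun x => η x ^ 2) μ :=
      intcont μ _ (C₀ ^ 2) (hηc.pow 2) (fun y => by
        rw [abs_pow]
        nlinarith [hC₀ y, abs_nonneg (η y)])
    have intφη : Integrable (fun x => φε x * η x) μ := by
      refine Integrable.mono' (integrable_const (A * C₀))
        (aemφ.aestronglyMeasurable.mul hηc.aestronglyMeasurable) ?_
      filter_upwards [haeΩ] with x hx
      rw [Real.norm_eq_abs, abs_mul]
      have h1 : |φε x| ≤ A := by rw [← Real.norm_eq_abs]; exact hA x hx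
      have h2 := hC₀ x
      exact mul_le_mul h1 h2 (abs_nonneg _) hA0
    have hwcont : Continuous (fun p : E2 × E2 => η p.1) := hηc.comp continuous_fst
    have hwbd : ∀ p : E2 × E2, |η p.1| ≤ C₀ := fun p => hC₀ p.1
    have intEt : ∀ t : ℝ,
        Integrable (fun p => E p * (Real.exp (t * η p.1 / ε) - 1)) (μ.prod σ) := by
      intro t
      refine intEmul _ (Real.exp (|t| * C₀ / ε) + 1)
        ((Real.continuous_exp.comp ((continuous_const.mul hwcont).div_const ε)).sub
          continuous_const) ?_
      intro p
      refine (hexpabs _).trans ?_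
      have : |t * η p.1 / ε| ≤ |t| * C₀ / ε := by
        rw [abs_div, abs_mul, abs_of_pos hε]
        gcongr
        exact hwbd p
      exact add_le_add_left (Real.exp_le_exp.2 this) 1
    set Qη : ℝ := f ^ 2 / (2 * g) * ∫ x, η x ^ 2 ∂μ with hQηdef
    have hQη0 : 0 ≤ Qη := mul_nonneg (by positivity)
      (integral_nonneg fun x => sq_nonneg (η x))
    have hineq : ∀ t : ℝ, t * (-(f ^ 2 / g) * ∫ x, φε x * η x ∂μ)
        ≤ ε * (∫ p, E p * (Real.exp (t * η p.1 / ε) - 1) ∂(μ.prod σ)) + t ^ 2 * Qη := by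
      intro t
      have hadm' : EntAdmissible Ω σ (fun x => φε x + t * η x) ψε :=
        ⟨hadm.1.add (continuous_const.mul hηc).continuousOn, hadm.2⟩
      have hle := hmax _ _ hadm'
      have h1 : ∫ x, (φε x + t * η x) ^ 2 ∂μ
          = (∫ x, φε x ^ 2 ∂μ) + (t * (2 * ∫ x, φε x * η x ∂μ)
            + t ^ 2 * ∫ x, η x ^ 2 ∂μ) := by
        calc ∫ x, (φε x + t * η x) ^ 2 ∂μ
            = ∫ x, (φε x ^ 2 + (t * (2 * (φε x * η x)) + t ^ 2 * η x ^ 2)) ∂μ :=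
              integral_congr_ae (Filter.Eventually.of_forall fun x => by ring)
          _ = (∫ x, φε x ^ 2 ∂μ)
              + ∫ x, (t * (2 * (φε x * η x)) + t ^ 2 * η x ^ 2) ∂μ := by
              refine integral_add intφε2 ?_
              exact ((intφη.const_mul 2).const_mul t).add (intη2.const_mul (t ^ 2))
          _ = (∫ x, φε x ^ 2 ∂μ) + ((∫ x, t * (2 * (φε x * η x)) ∂μ)
              + ∫ x, t ^ 2 * η x ^ 2 ∂μ) := by
              congr 1
              refine integral_add ?_ ?_
              · exact (intφη.const_mul 2).const_mul t
              · exact intη2.const_mul (t ^ 2)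
          _ = (∫ x, φε x ^ 2 ∂μ) + (t * (2 * ∫ x, φε x * η x ∂μ)
              + t ^ 2 * ∫ x, η x ^ 2 ∂μ) := by
              rw [integral_const_mul, integral_const_mul, integral_const_mul]
      have hptw : ∀ p : E2 × E2,
          Real.exp ((φε p.1 + t * η p.1 + ψε p.2 - ‖p.1 - p.2‖ ^ 2 / 2) / ε) - 1
          = (E p - 1) + E p * (Real.exp (t * η p.1 / ε) - 1) := by
        intro p
        have harg : (φε p.1 + t * η p.1 + ψε p.2 - ‖p.1 - p.2‖ ^ 2 / 2) / ε
            = (φε p.1 + ψε p.2 - ‖p.1 - p.2‖ ^ 2 / 2) / ε + t * η p.1 / ε := by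
          field_simp
          ring
        rw [harg, Real.exp_add, hEapp p]
        ring
      have h2 : (∫ p, (Real.exp ((φε p.1 + t * η p.1 + ψε p.2
            - ‖p.1 - p.2‖ ^ 2 / 2) / ε) - 1) ∂(μ.prod σ))
          = (∫ p, (E p - 1) ∂(μ.prod σ))
            + ∫ p, E p * (Real.exp (t * η p.1 / ε) - 1) ∂(μ.prod σ) := by
        calc (∫ p, (Real.exp ((φε p.1 + t * η p.1 + ψε p.2
              - ‖p.1 - p.2‖ ^ 2 / 2) / ε) - 1) ∂(μ.prod σ))
            = ∫ p, ((E p - 1) + E p * (Real.exp (t * η p.1 / ε) - 1)) ∂(μ.prod σ) :=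
              integral_congr_ae (Filter.Eventually.of_forall fun p => hptw p)
          _ = _ := by
              refine integral_add ?_ (intEt t)
              exact intE.sub (integrable_const 1)
      rw [Dse, Dse] at hle
      simp only [hEapp] at hle
      rw [h1, h2] at hle
      have hcoef : f ^ 2 / (2 * g) * (t * (2 * ∫ x, φε x * η x ∂μ))
          = -(t * (-(f ^ 2 / g) * ∫ x, φε x * η x ∂μ)) := by
        field_simp
      rw [hQηdef]
      nlinarith [hle, hcoef]
    set K₀ : ℝ := C₀ ^ 2 / ε * IE + Qη with hK₀def
    have hK₀0 : 0 ≤ K₀ := add_nonneg (mul_nonneg (by positivity) IE0) hQη0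
    set t₀ : ℝ := ε / (C₀ + 1) with ht₀def
    have ht₀pos : 0 < t₀ := by positivity
    have htC : ∀ t : ℝ, 0 < t → t ≤ t₀ → |t| * C₀ ≤ ε := by
      intro t ht ht'
      rw [abs_of_pos ht]
      calc t * C₀ ≤ t₀ * C₀ := by gcongr
        _ ≤ ε := by
          rw [ht₀def, div_mul_eq_mul_div, div_le_iff₀ (by positivity)]
          nlinarith
    refine aux_squeeze _ _ K₀ t₀ ht₀pos hK₀0 ?_ ?_
    · intro t ht ht'
      have h1 := hineq t
      have h2 := abs_le.1 (hest _ C₀ hwcont hwbd t (htC t ht ht'))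
      rw [hK₀def]
      have h22 := h2.2
      nlinarith [h2.2, h1]
    · intro t ht ht'
      have h1 := hineq (-t)
      have h2 := abs_le.1 (hest _ C₀ hwcont hwbd (-t) (by rw [abs_neg]; exact htC t ht ht'))
      have hsq : (-t) ^ 2 = t ^ 2 := by ring
      rw [hsq] at h1 h2
      rw [hK₀def]
      nlinarith [h2.2, h1]
  -- sections and their integrals
  have hcostcont : ∀ y : E2, Continuous (fun x : E2 => ‖x - y‖ ^ 2 / 2) := fun y =>
    ((continuous_id.sub continuous_const).norm.pow 2).div_const 2
  have hcostcont' : ∀ x : E2, Continuous (fun y : E2 => ‖x - y‖ ^ 2 / 2) := fun x =>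
    ((continuous_const.sub continuous_id).norm.pow 2).div_const 2
  have intsec_a : ∀ y : E2, Integrable (fun x => Real.exp ((φε x - ‖x - y‖ ^ 2 / 2) / ε)) μ := by
    intro y
    refine Integrable.mono' (integrable_const (Real.exp (A / ε)))
      (Real.measurable_exp.comp_aemeasurable
        ((aemφ.sub (hcostcont y).aemeasurable).div_const ε)).aestronglyMeasurable ?_
    filter_upwards [haeΩ] with x hx
    rw [Real.norm_eq_abs, abs_of_pos (Real.exp_pos _)]
    apply Real.exp_le_exp.2
    have h1 : φε x ≤ A := le_trans (le_abs_self _) (hA x hx)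
    have h2 : 0 ≤ ‖x - y‖ ^ 2 / 2 := by positivity
    gcongr
    linarith
  have intsec_J : ∀ x : E2, Integrable (fun y => Real.exp ((ψε y - ‖x - y‖ ^ 2 / 2) / ε)) σ := by
    intro x
    refine Integrable.mono' (integrable_const (Real.exp (B / ε)))
      (Real.measurable_exp.comp_aemeasurable
        ((aemψ.sub (hcostcont' x).aemeasurable).div_const ε)).aestronglyMeasurable ?_
    filter_upwards [haeS] with y hy
    rw [Real.norm_eq_abs, abs_of_pos (Real.exp_pos _)]
    apply Real.exp_le_exp.2
    have h1 : ψε y ≤ B := le_trans (le_abs_self _) (hB y hy)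
    have h2 : 0 ≤ ‖x - y‖ ^ 2 / 2 := by positivity
    gcongr
    linarith
  set aF : E2 → ℝ := fun y => ∫ x, Real.exp ((φε x - ‖x - y‖ ^ 2 / 2) / ε) ∂μ with haFdef
  set JF : E2 → ℝ := fun x => ∫ y, Real.exp ((ψε y - ‖x - y‖ ^ 2 / 2) / ε) ∂σ with hJFdef
  -- continuity of aF and JF by dominated convergence
  have haFcont : Continuous aF := by
    rw [continuous_iff_continuousAt]
    intro y₀
    refine MeasureTheory.continuousAt_of_dominated ?_ ?_ (integrable_const (Real.exp (A / ε))) ?_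
    · filter_upwards with y
      exact (Real.measurable_exp.comp_aemeasurable
        ((aemφ.sub (hcostcont y).aemeasurable).div_const ε)).aestronglyMeasurable
    · filter_upwards with y
      filter_upwards [haeΩ] with x hx
      rw [Real.norm_eq_abs, abs_of_pos (Real.exp_pos _)]
      apply Real.exp_le_exp.2
      have h1 : φε x ≤ A := le_trans (le_abs_self _) (hA x hx)
      have h2 : 0 ≤ ‖x - y‖ ^ 2 / 2 := by positivity
      gcongr
      linarith
    · filter_upwards with x
      exact (Real.continuous_exp.comp (((continuous_const.sub
        ((continuous_const.sub continuous_id).norm.pow 2 |>.div_const 2))).div_const ε)).continuousAt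
  have hJFcont : Continuous JF := by
    rw [continuous_iff_continuousAt]
    intro x₀
    refine MeasureTheory.continuousAt_of_dominated ?_ ?_ (integrable_const (Real.exp (B / ε))) ?_
    · filter_upwards with x
      exact (Real.measurable_exp.comp_aemeasurable
        ((aemψ.sub (hcostcont' x).aemeasurable).div_const ε)).aestronglyMeasurable
    · filter_upwards with x
      filter_upwards [haeS] with y hy
      rw [Real.norm_eq_abs, abs_of_pos (Real.exp_pos _)]
      apply Real.exp_le_exp.2
      have h1 : ψε y ≤ B := le_trans (le_abs_self _) (hB y hy)
      have h2 : 0 ≤ ‖x - y‖ ^ 2 / 2 := by positivity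
      gcongr
      linarith
    · filter_upwards with y
      exact (Real.continuous_exp.comp (((continuous_const.sub
        ((continuous_id.sub continuous_const).norm.pow 2 |>.div_const 2))).div_const ε)).continuousAt
  -- pointwise section integrals of E
  have hEsec_y : ∀ y : E2, ∫ x, E (x, y) ∂μ = Real.exp (ψε y / ε) * aF y := by
    intro y
    show _ = Real.exp (ψε y / ε) * ∫ x, Real.exp ((φε x - ‖x - y‖ ^ 2 / 2) / ε) ∂μ
    rw [← integral_const_mul]
    refine integral_congr_ae (Filter.Eventually.of_forall fun x => ?_)
    show Real.exp ((φε x + ψε y - ‖x - y‖ ^ 2 / 2) / ε)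
      = Real.exp (ψε y / ε) * Real.exp ((φε x - ‖x - y‖ ^ 2 / 2) / ε)
    rw [← Real.exp_add]
    congr 1
    field_simp
    ring
  have hEsec_x : ∀ x : E2, ∫ y, E (x, y) ∂σ = Real.exp (φε x / ε) * JF x := by
    intro x
    show _ = Real.exp (φε x / ε) * ∫ y, Real.exp ((ψε y - ‖x - y‖ ^ 2 / 2) / ε) ∂σ
    rw [← integral_const_mul]
    refine integral_congr_ae (Filter.Eventually.of_forall fun y => ?_)
    show Real.exp ((φε x + ψε y - ‖x - y‖ ^ 2 / 2) / ε)
      = Real.exp (φε x / ε) * Real.exp ((ψε y - ‖x - y‖ ^ 2 / 2) / ε)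
    rw [← Real.exp_add]
    congr 1
    field_simp
    ring
  -- bounds for aF and JF
  have haF0 : ∀ y, 0 ≤ aF y := fun y => integral_nonneg fun x => (Real.exp_pos _).le
  have hJF0 : ∀ x, 0 ≤ JF x := fun x => integral_nonneg fun y => (Real.exp_pos _).le
  have haFle : ∀ y, aF y ≤ Real.exp (A / ε) := by
    intro y
    have hconst : ∫ _x, Real.exp (A / ε) ∂μ = Real.exp (A / ε) := by simp
    refine le_trans (le_of_le_of_eq (integral_mono_ae (intsec_a y)
      (integrable_const _) ?_) hconst) le_rfl
    filter_upwards [haeΩ] with x hx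
    apply Real.exp_le_exp.2
    have h1 : φε x ≤ A := le_trans (le_abs_self _) (hA x hx)
    have h2 : 0 ≤ ‖x - y‖ ^ 2 / 2 := by positivity
    gcongr
    linarith
  have hJFle : ∀ x, JF x ≤ Real.exp (B / ε) := by
    intro x
    have hconst : ∫ _y, Real.exp (B / ε) ∂σ = Real.exp (B / ε) := by simp
    refine le_trans (le_of_le_of_eq (integral_mono_ae (intsec_J x)
      (integrable_const _) ?_) hconst) le_rfl
    filter_upwards [haeS] with y hy
    apply Real.exp_le_exp.2
    have h1 : ψε y ≤ B := le_trans (le_abs_self _) (hB y hy)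
    have h2 : 0 ≤ ‖x - y‖ ^ 2 / 2 := by positivity
    gcongr
    linarith
  -- Fubini
  have hFub_y : ∀ η : E2 → ℝ, Continuous η → (∃ C, ∀ y, |η y| ≤ C) →
      ∫ p, E p * η p.2 ∂(μ.prod σ) = ∫ y, η y * (Real.exp (ψε y / ε) * aF y) ∂σ := by
    rintro η hηc ⟨C₀, hC₀⟩
    have hint : Integrable (fun p => E p * η p.2) (μ.prod σ) :=
      intEmul _ C₀ (hηc.comp continuous_snd) (fun p => hC₀ p.2)
    rw [MeasureTheory.integral_prod_symm _ hint]
    refine integral_congr_ae (Filter.Eventually.of_forall fun y => ?_)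
    show ∫ x, E (x, y) * η y ∂μ = _
    rw [integral_mul_const, hEsec_y y]
    ring
  have hFub_x : ∀ η : E2 → ℝ, Continuous η → (∃ C, ∀ y, |η y| ≤ C) →
      ∫ p, E p * η p.1 ∂(μ.prod σ) = ∫ x, η x * (Real.exp (φε x / ε) * JF x) ∂μ := by
    rintro η hηc ⟨C₀, hC₀⟩
    have hint : Integrable (fun p => E p * η p.1) (μ.prod σ) :=
      intEmul _ C₀ (hηc.comp continuous_fst) (fun p => hC₀ p.1)
    rw [MeasureTheory.integral_prod _ hint]
    refine integral_congr_ae (Filter.Eventually.of_forall fun x => ?_)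
    show ∫ y, E (x, y) * η x ∂σ = _
    rw [integral_mul_const, hEsec_x x]
    ring
  -- integrability of the densities
  have hint_m : Integrable (fun y => Real.exp (ψε y / ε) * aF y) σ := by
    refine Integrable.mono' (integrable_const (Real.exp (B / ε) * Real.exp (A / ε)))
      ((Real.measurable_exp.comp_aemeasurable (aemψ.div_const ε)).mul
        haFcont.aemeasurable).aestronglyMeasurable ?_
    filter_upwards [haeS] with y hy
    rw [Real.norm_eq_abs, abs_mul, abs_of_pos (Real.exp_pos _), abs_of_nonneg (haF0 y)]
    have h1 : Real.exp (ψε y / ε) ≤ Real.exp (B / ε) := by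
      apply Real.exp_le_exp.2
      have : ψε y ≤ B := le_trans (le_abs_self _) (hB y hy)
      gcongr
    exact mul_le_mul h1 (haFle y) (haF0 y) (Real.exp_pos _).le
  have hint_h : Integrable (fun x => Real.exp (φε x / ε) * JF x) μ := by
    refine Integrable.mono' (integrable_const (Real.exp (A / ε) * Real.exp (B / ε)))
      ((Real.measurable_exp.comp_aemeasurable (aemφ.div_const ε)).mul
        hJFcont.aemeasurable).aestronglyMeasurable ?_
    filter_upwards [haeΩ] with x hx
    rw [Real.norm_eq_abs, abs_mul, abs_of_pos (Real.exp_pos _), abs_of_nonneg (hJF0 x)]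
    have h1 : Real.exp (φε x / ε) ≤ Real.exp (A / ε) := by
      apply Real.exp_le_exp.2
      have : φε x ≤ A := le_trans (le_abs_self _) (hA x hx)
      gcongr
    exact mul_le_mul h1 (hJFle x) (hJF0 x) (Real.exp_pos _).le
  -- weak formulation in y gives m = 1 a.e.
  have hm1 : ∀ᵐ y ∂σ, Real.exp (ψε y / ε) * aF y = 1 := by
    have hd0 : (fun y => 1 - Real.exp (ψε y / ε) * aF y) =ᵐ[σ] 0 := by
      refine weak_ae_zero hScpt hSnull ?_ ?_
      · exact continuousOn_const.sub
          ((Real.continuous_exp.comp_continuousOn (hadm.2.div_const ε)).mul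
            haFcont.continuousOn)
      · intro η hηc hbd
        obtain ⟨C₀, hC₀⟩ := hbd
        have hηm : Integrable (fun y => η y * (Real.exp (ψε y / ε) * aF y)) σ :=
          hint_m.bdd_mul hηc.aestronglyMeasurable (Filter.Eventually.of_forall fun y => by
            rw [Real.norm_eq_abs]; exact hC₀ y)
        have intη : Integrable η σ := intcont σ η C₀ hηc hC₀
        have hsplit : ∫ y, η y * (1 - Real.exp (ψε y / ε) * aF y) ∂σ
            = (∫ y, η y ∂σ) - ∫ y, η y * (Real.exp (ψε y / ε) * aF y) ∂σ := by
          rw [← integral_sub intη hηm]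
          exact integral_congr_ae (Filter.Eventually.of_forall fun y => by ring)
        rw [hsplit, ← hFub_y η hηc ⟨C₀, hC₀⟩, ← keyψ η hηc ⟨C₀, hC₀⟩, sub_self]
    filter_upwards [hd0] with y hy
    have : 1 - Real.exp (ψε y / ε) * aF y = 0 := hy
    linarith
  -- conclusion (a)
  have concl_a : ∀ᵐ y ∂σ, ψε y
      = -ε * Real.log (∫ x, Real.exp ((φε x - ‖x - y‖ ^ 2 / 2) / ε) ∂μ) := by
    filter_upwards [hm1] with y hy
    have haF : aF y = (Real.exp (ψε y / ε))⁻¹ := eq_inv_of_mul_eq_one_left (by linarith [hy])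
    have hlog : Real.log (aF y) = -(ψε y / ε) := by
      rw [haF, ← Real.exp_neg, Real.log_exp]
    have hgoal : (∫ x, Real.exp ((φε x - ‖x - y‖ ^ 2 / 2) / ε) ∂μ) = aF y := rfl
    rw [hgoal, hlog]
    field_simp
  -- weak formulation in x
  have hbweak : (fun x => f ^ 2 / g * φε x + Real.exp (φε x / ε) * JF x) =ᵐ[μ] 0 := by
    refine weak_ae_zero hΩcpt hμΩc ?_ ?_
    · exact (continuousOn_const.mul hadm.1).add
        ((Real.continuous_exp.comp_continuousOn (hadm.1.div_const ε)).mul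
          hJFcont.continuousOn)
    · intro η hηc hbd
      obtain ⟨C₀, hC₀⟩ := hbd
      have intη : Integrable η μ := intcont μ η C₀ hηc hC₀
      have intφη : Integrable (fun x => φε x * η x) μ := by
        refine Integrable.mono' (integrable_const (A * C₀))
          (aemφ.aestronglyMeasurable.mul hηc.aestronglyMeasurable) ?_
        filter_upwards [haeΩ] with x hx
        rw [Real.norm_eq_abs, abs_mul]
        have h1 : |φε x| ≤ A := by rw [← Real.norm_eq_abs]; exact hA x hx
        exact mul_le_mul h1 (hC₀ x) (abs_nonneg _) hA0
      have hηh : Integrable (fun x => η x * (Real.exp (φε x / ε) * JF x)) μ :=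
        hint_h.bdd_mul hηc.aestronglyMeasurable (Filter.Eventually.of_forall fun x => by
          rw [Real.norm_eq_abs]; exact hC₀ x)
      have hsplit : ∫ x, η x * (f ^ 2 / g * φε x + Real.exp (φε x / ε) * JF x) ∂μ
          = f ^ 2 / g * (∫ x, φε x * η x ∂μ)
            + ∫ x, η x * (Real.exp (φε x / ε) * JF x) ∂μ := by
        rw [← integral_const_mul, ← integral_add (intφη.const_mul (f ^ 2 / g)) hηh]
        exact integral_congr_ae (Filter.Eventually.of_forall fun x => by ring)
      rw [hsplit, ← hFub_x η hηc ⟨C₀, hC₀⟩, ← keyφ η hηc ⟨C₀, hC₀⟩]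
      ring
  -- conclusion (b)
  have concl_b : ∀ᵐ x ∂μ, φε x < 0 ∧
      -(f ^ 2 / g) * φε x =
        Real.exp (φε x / ε) * ∫ y, Real.exp ((ψε y - ‖x - y‖ ^ 2 / 2) / ε) ∂σ := by
    filter_upwards [hbweak, haeΩ] with x hx hxΩ
    have hx' : f ^ 2 / g * φε x + Real.exp (φε x / ε) * JF x = 0 := hx
    have hJpos : 0 < JF x := by
      have hle : Real.exp ((-B - R) / ε) ≤ JF x := by
        have hconst : ∫ _y, Real.exp ((-B - R) / ε) ∂σ = Real.exp ((-B - R) / ε) := by simp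
        refine le_trans (le_of_eq hconst.symm)
          (integral_mono_ae (integrable_const _) (intsec_J x) ?_)
        filter_upwards [haeS] with y hy
        apply Real.exp_le_exp.2
        have h1 : -B ≤ ψε y := neg_le_of_abs_le (hB y hy)
        have h2 : ‖x - y‖ ^ 2 / 2 ≤ R := hcost x hxΩ y (hSK hy)
        gcongr <;> linarith
      exact lt_of_lt_of_le (Real.exp_pos _) hle
    have hexppos := Real.exp_pos (φε x / ε)
    have hfg : 0 < f ^ 2 / g := by positivity
    constructor
    · nlinarith
    · have hJx : JF x = ∫ y, Real.exp ((ψε y - ‖x - y‖ ^ 2 / 2) / ε) ∂σ := rfl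
      rw [← hJx]
      linarith
  -- section integrability of E
  have intEsec_y : ∀ y : E2, Integrable (fun x => E (x, y)) μ := by
    intro y
    refine ((intsec_a y).const_mul (Real.exp (ψε y / ε))).congr
      (Filter.Eventually.of_forall fun x => ?_)
    show Real.exp (ψε y / ε) * Real.exp ((φε x - ‖x - y‖ ^ 2 / 2) / ε)
      = Real.exp ((φε x + ψε y - ‖x - y‖ ^ 2 / 2) / ε)
    rw [← Real.exp_add]
    congr 1
    field_simp
    ring
  have intEsec_x : ∀ x : E2, Integrable (fun y => E (x, y)) σ := by
    intro x
    refine ((intsec_J x).const_mul (Real.exp (φε x / ε))).congr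
      (Filter.Eventually.of_forall fun y => ?_)
    show Real.exp (φε x / ε) * Real.exp ((ψε y - ‖x - y‖ ^ 2 / 2) / ε)
      = Real.exp ((φε x + ψε y - ‖x - y‖ ^ 2 / 2) / ε)
    rw [← Real.exp_add]
    congr 1
    field_simp
    ring
  set ρ : E2 × E2 → ENNReal := fun p => ENNReal.ofReal (E p) with hρdef
  have aemρ : AEMeasurable ρ (μ.prod σ) := aemE.ennreal_ofReal
  -- second marginal
  have hmarg2 : ((μ.prod σ).withDensity ρ).map Prod.snd = σ := by
    refine Measure.ext fun bs hbs => ?_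
    rw [Measure.map_apply measurable_snd hbs,
      withDensity_apply _ (measurable_snd hbs), ← lintegral_indicator (measurable_snd hbs),
      MeasureTheory.lintegral_prod_symm _ (aemρ.indicator (measurable_snd hbs))]
    have hpt : ∀ y, (∫⁻ x, (Prod.snd ⁻¹' bs).indicator ρ (x, y) ∂μ)
        = bs.indicator (fun y => ∫⁻ x, ρ (x, y) ∂μ) y := by
      intro y
      by_cases hy : y ∈ bs
      · rw [Set.indicator_of_mem hy]
        refine lintegral_congr fun x => ?_
        rw [Set.indicator_of_mem]
        exact hy
      · rw [Set.indicator_of_notMem hy]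
        refine (lintegral_congr fun x => ?_).trans lintegral_zero
        rw [Set.indicator_of_notMem]
        exact hy
    rw [lintegral_congr hpt, lintegral_indicator hbs]
    have hone : (fun y => ∫⁻ x, ρ (x, y) ∂μ) =ᵐ[σ] fun _ => 1 := by
      filter_upwards [hm1] with y hy
      have h1 : ∫⁻ x, ρ (x, y) ∂μ = ENNReal.ofReal (∫ x, E (x, y) ∂μ) :=
        (MeasureTheory.ofReal_integral_eq_lintegral_ofReal (intEsec_y y)
          (Filter.Eventually.of_forall fun x => (hEpos _).le)).symm
      show ∫⁻ x, ρ (x, y) ∂μ = 1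
      rw [h1, hEsec_y y, hy]
      simp
    calc ∫⁻ y in bs, ∫⁻ x, ρ (x, y) ∂μ ∂σ
        = ∫⁻ y in bs, 1 ∂σ := lintegral_congr_ae (ae_restrict_of_ae hone)
      _ = σ bs := setLIntegral_one bs
  -- first marginal
  have hmarg1 : ((μ.prod σ).withDensity ρ).map Prod.fst
      = μ.withDensity fun x => ENNReal.ofReal (-(f ^ 2 / g) * φε x) := by
    refine Measure.ext fun as has => ?_
    rw [Measure.map_apply measurable_fst has,
      withDensity_apply _ (measurable_fst has), ← lintegral_indicator (measurable_fst has),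
      MeasureTheory.lintegral_prod _ (aemρ.indicator (measurable_fst has)),
      withDensity_apply _ has]
    have hpt : ∀ x, (∫⁻ y, (Prod.fst ⁻¹' as).indicator ρ (x, y) ∂σ)
        = as.indicator (fun x => ∫⁻ y, ρ (x, y) ∂σ) x := by
      intro x
      by_cases hx : x ∈ as
      · rw [Set.indicator_of_mem hx]
        refine lintegral_congr fun y => ?_
        rw [Set.indicator_of_mem]
        exact hx
      · rw [Set.indicator_of_notMem hx]
        refine (lintegral_congr fun y => ?_).trans lintegral_zero
        rw [Set.indicator_of_notMem]
        exact hx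
    rw [lintegral_congr hpt, lintegral_indicator has]
    refine lintegral_congr_ae (ae_restrict_of_ae ?_)
    filter_upwards [concl_b] with x hx
    have h1 : ∫⁻ y, ρ (x, y) ∂σ = ENNReal.ofReal (∫ y, E (x, y) ∂σ) :=
      (MeasureTheory.ofReal_integral_eq_lintegral_ofReal (intEsec_x x)
        (Filter.Eventually.of_forall fun y => (hEpos _).le)).symm
    show ∫⁻ y, ρ (x, y) ∂σ = ENNReal.ofReal (-(f ^ 2 / g) * φε x)
    rw [h1, hEsec_x x]
    congr 1
    exact (hx.2).symm
  exact ⟨concl_a, concl_b, hmarg2, hmarg1⟩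
end

section
/- Let ε > 0, let μ be a finite compactly supported Borel measure on ℝᵈ which is not the zero measure, and let φ : ℝᵈ → ℝ be bounded and Borel measurable. Define ψ : ℝᵈ → ℝ by ψ(y) := −ε·log ∫ exp((φ(x) − ½‖x−y‖²)/ε) dμ(x). Then ψ is differentiable on ℝᵈ and its gradient is the barycentric map: ∇ψ(y) = y − ∫ x·exp((φ(x) + ψ(y) − ½‖x−y‖²)/ε) dμ(x) for every y ∈ ℝᵈ; equivalently, ∇ψ(y) = y − (∫ x·exp((φ(x)−½‖x−y‖²)/ε) dμ(x)) / (∫ exp((φ(x)−½‖x−y‖²)/ε) dμ(x)). -/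
open MeasureTheory

set_option maxHeartbeats 1000000
set_option synthInstance.maxHeartbeats 400000

private lemma aux_fderiv {d : ℕ} (ε : ℝ) (φ : EuclideanSpace ℝ (Fin d) → ℝ)
    (x y₀ : EuclideanSpace ℝ (Fin d)) :
    HasFDerivAt (fun y : EuclideanSpace ℝ (Fin d) => Real.exp ((φ x - ‖x - y‖ ^ 2 / 2) / ε))
      ((Real.exp ((φ x - ‖x - y₀‖ ^ 2 / 2) / ε) * ε⁻¹) • innerSL ℝ (x - y₀)) y₀ := by
  have h1 := ((((hasFDerivAt_id y₀).const_sub x).norm_sq.mul_const (2:ℝ)⁻¹).const_sub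
      (φ x)).mul_const ε⁻¹
  have h2 := (Real.hasDerivAt_exp _).comp_hasFDerivAt y₀ h1
  simp only [div_eq_mul_inv]
  refine h2.congr_fderiv ?_
  ext v
  simp [ContinuousLinearMap.smul_apply, real_inner_smul_left, smul_smul]
  ring

/-- Let `ε > 0`, `μ` a nonzero finite compactly supported Borel measure
on ℝᵈ, and `φ : ℝᵈ → ℝ` bounded and Borel measurable.  Define the soft-min potential
`ψ(y) := −ε·log ∫ exp((φ(x) − ½‖x−y‖²)/ε) dμ(x)`.  Then `ψ` is differentiable on ℝᵈ and
its gradient is the barycentric map: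
`∇ψ(y) = y − ∫ x·exp((φ(x) + ψ(y) − ½‖x−y‖²)/ε) dμ(x)` for every `y`; equivalently,
`∇ψ(y) = y − (∫ x·exp((φ(x)−½‖x−y‖²)/ε) dμ(x)) / (∫ exp((φ(x)−½‖x−y‖²)/ε) dμ(x))`. -/
theorem stmt_9 {d : ℕ} (ε : ℝ) (hε : 0 < ε)
    (μ : Measure (EuclideanSpace ℝ (Fin d))) [IsFiniteMeasure μ]
    (hμne : μ ≠ 0) (hμcpt : ∃ K, IsCompact K ∧ μ Kᶜ = 0)
    (φ : EuclideanSpace ℝ (Fin d) → ℝ) (hφm : Measurable φ)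
    (hφb : ∃ C : ℝ, ∀ x, |φ x| ≤ C)
    (ψ : EuclideanSpace ℝ (Fin d) → ℝ)
    (hψ : ∀ y, ψ y = -ε * Real.log (∫ x, Real.exp ((φ x - ‖x - y‖ ^ 2 / 2) / ε) ∂μ)) :
    ∀ y : EuclideanSpace ℝ (Fin d),
      HasGradientAt ψ
        (y - ∫ x, Real.exp ((φ x + ψ y - ‖x - y‖ ^ 2 / 2) / ε) • x ∂μ) y ∧
      y - (∫ x, Real.exp ((φ x + ψ y - ‖x - y‖ ^ 2 / 2) / ε) • x ∂μ) =
        y - (∫ x, Real.exp ((φ x - ‖x - y‖ ^ 2 / 2) / ε) ∂μ)⁻¹ •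
              ∫ x, Real.exp ((φ x - ‖x - y‖ ^ 2 / 2) / ε) • x ∂μ := by
  obtain ⟨K, hKc, hKμ⟩ := hμcpt
  obtain ⟨C, hC⟩ := hφb
  obtain ⟨R, hRK⟩ : ∃ R : ℝ, ∀ x ∈ K, ‖x‖ ≤ R := by
    obtain ⟨R, hR⟩ := hKc.isBounded.subset_closedBall 0
    exact ⟨R, fun x hx => by simpa using hR hx⟩
  have haeK : ∀ᵐ x ∂μ, x ∈ K := by
    rw [MeasureTheory.ae_iff]
    exact hKμ
  set f : EuclideanSpace ℝ (Fin d) → EuclideanSpace ℝ (Fin d) → ℝ :=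
    fun y x => Real.exp ((φ x - ‖x - y‖ ^ 2 / 2) / ε) with hf
  have hfm : ∀ y, Measurable (f y) := by
    intro y
    apply Real.measurable_exp.comp
    exact (hφm.sub (((measurable_id.sub_const y).norm.pow_const 2).div_const 2)).div_const ε
  have hfb : ∀ y x, f y x ≤ Real.exp (C / ε) := by
    intro y x
    apply Real.exp_le_exp.mpr
    gcongr
    nlinarith [abs_le.mp (hC x), sq_nonneg ‖x - y‖]
  have hfint : ∀ y, Integrable (f y) μ := by
    intro y
    refine Integrable.mono' (integrable_const (Real.exp (C / ε)))
      (hfm y).aestronglyMeasurable ?_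
    filter_upwards with x
    rw [Real.norm_eq_abs, abs_of_pos (Real.exp_pos _)]
    exact hfb y x
  have hfxint : ∀ y, Integrable (fun x => f y x • x) μ := by
    intro y
    refine Integrable.mono' (integrable_const (Real.exp (C / ε) * R))
      ((hfm y).aestronglyMeasurable.smul aestronglyMeasurable_id) ?_
    filter_upwards [haeK] with x hx
    rw [norm_smul, Real.norm_eq_abs, abs_of_pos (Real.exp_pos _)]
    exact mul_le_mul (hfb y x) (hRK x hx) (norm_nonneg x) (Real.exp_pos _).le
  have hFpos : ∀ y, 0 < ∫ x, f y x ∂μ := by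
    intro y
    rw [integral_pos_iff_support_of_nonneg (fun x => (Real.exp_pos _).le) (hfint y)]
    have : Function.support (f y) = Set.univ :=
      Set.eq_univ_of_forall fun x => (Real.exp_pos _).ne'
    rw [this]
    exact MeasureTheory.Measure.measure_univ_pos.mpr hμne
  intro y₀
  -- derivative of the integral
  have hder : HasFDerivAt (fun y => ∫ x, f y x ∂μ)
      (∫ x, (f y₀ x * ε⁻¹) • innerSL ℝ (x - y₀) ∂μ) y₀ := by
    refine hasFDerivAt_integral_of_dominated_of_fderiv_le
      (F' := fun y x => (f y x * ε⁻¹) • innerSL ℝ (x - y))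
      (bound := fun _ => Real.exp (C / ε) * ε⁻¹ * (R + (‖y₀‖ + 1)))
      (Metric.ball_mem_nhds y₀ zero_lt_one) (Filter.Eventually.of_forall fun y => (hfm y).aestronglyMeasurable)
      (hfint y₀) ?_ ?_ (integrable_const _) ?_
    · exact ((hfm y₀).mul_const _).aestronglyMeasurable.smul
        (((innerSL ℝ).continuous.comp (continuous_id.sub continuous_const)).aestronglyMeasurable)
    · filter_upwards [haeK] with x hx
      intro y hy
      rw [norm_smul (f y x * ε⁻¹) ((innerSL ℝ) (x - y)), innerSL_apply_norm,
        Real.norm_eq_abs, abs_of_pos (mul_pos (Real.exp_pos _) (inv_pos.mpr hε))]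
      have h1 : ‖x - y‖ ≤ R + (‖y₀‖ + 1) := by
        have : ‖y‖ ≤ ‖y₀‖ + 1 := by
          have := mem_ball_iff_norm.mp hy
          calc ‖y‖ ≤ ‖y₀‖ + ‖y - y₀‖ := by
                simpa using norm_add_le (y₀ : EuclideanSpace ℝ (Fin d)) (y - y₀)
            _ ≤ ‖y₀‖ + 1 := by linarith
        calc ‖x - y‖ ≤ ‖x‖ + ‖y‖ := norm_sub_le _ _
          _ ≤ R + (‖y₀‖ + 1) := add_le_add (hRK x hx) this
      exact mul_le_mul (mul_le_mul (hfb y x) le_rfl (by positivity) (Real.exp_pos _).le)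
        h1 (norm_nonneg _) (by positivity)
    · filter_upwards with x
      intro y hy
      exact aux_fderiv ε φ x y
  have heq0 : (fun x => (f y₀ x * ε⁻¹) • (x - y₀))
      = fun x => ε⁻¹ • (f y₀ x • x - f y₀ x • y₀) := by
    funext x
    simp [smul_sub, smul_smul, mul_comm]
  have hint' : Integrable (fun x => (f y₀ x * ε⁻¹) • (x - y₀)) μ := by
    rw [heq0]
    exact ((hfxint y₀).sub ((hfint y₀).smul_const y₀)).smul ε⁻¹
  have hswap : ∫ x, (f y₀ x * ε⁻¹) • innerSL ℝ (x - y₀) ∂μ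
      = innerSL ℝ (∫ x, (f y₀ x * ε⁻¹) • (x - y₀) ∂μ) := by
    rw [← ContinuousLinearMap.integral_comp_comm (innerSL ℝ) hint']
    simp_rw [_root_.map_smul]
  have hFder : HasFDerivAt (fun y => ∫ x, f y x ∂μ)
      (innerSL ℝ (∫ x, (f y₀ x * ε⁻¹) • (x - y₀) ∂μ)) y₀ := hswap ▸ hder
  have hlog := (Real.hasDerivAt_log (hFpos y₀).ne').const_mul (-ε)
  have hψf : HasFDerivAt (fun y => -ε * Real.log (∫ x, f y x ∂μ))
      ((-ε * (∫ x, f y₀ x ∂μ)⁻¹) • innerSL ℝ (∫ x, (f y₀ x * ε⁻¹) • (x - y₀) ∂μ)) y₀ := by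
    have := hlog.comp_hasFDerivAt y₀ hFder; exact this
  have hgrad : HasGradientAt (fun y => -ε * Real.log (∫ x, f y x ∂μ))
      ((-ε * (∫ x, f y₀ x ∂μ)⁻¹) • ∫ x, (f y₀ x * ε⁻¹) • (x - y₀) ∂μ) y₀ := by
    rw [hasGradientAt_iff_hasFDerivAt]
    refine hψf.congr_fderiv ?_
    ext v
    simp [InnerProductSpace.toDual_apply_apply, real_inner_smul_left]
  have hA : ∫ x, (f y₀ x * ε⁻¹) • (x - y₀) ∂μ
      = ε⁻¹ • ((∫ x, f y₀ x • x ∂μ) - (∫ x, f y₀ x ∂μ) • y₀) := by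
    rw [heq0, integral_smul, integral_sub (hfxint y₀) ((hfint y₀).smul_const y₀),
      integral_smul_const]
  have hvec : (-ε * (∫ x, f y₀ x ∂μ)⁻¹) • ∫ x, (f y₀ x * ε⁻¹) • (x - y₀) ∂μ
      = y₀ - (∫ x, f y₀ x ∂μ)⁻¹ • ∫ x, f y₀ x • x ∂μ := by
    rw [hA, smul_smul]
    have h1 : -ε * (∫ x, f y₀ x ∂μ)⁻¹ * ε⁻¹ = -(∫ x, f y₀ x ∂μ)⁻¹ := by
      rw [neg_mul, neg_mul, mul_comm ε, mul_assoc, mul_inv_cancel₀ hε.ne', mul_one]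
    rw [h1, neg_smul, smul_sub, smul_smul, inv_mul_cancel₀ (hFpos y₀).ne', one_smul, neg_sub]
  have hψint : (∫ x, Real.exp ((φ x + ψ y₀ - ‖x - y₀‖ ^ 2 / 2) / ε) • x ∂μ)
      = (∫ x, f y₀ x ∂μ)⁻¹ • ∫ x, f y₀ x • x ∂μ := by
    have he : ∀ x, Real.exp ((φ x + ψ y₀ - ‖x - y₀‖ ^ 2 / 2) / ε)
        = (∫ x, f y₀ x ∂μ)⁻¹ * f y₀ x := by
      intro x
      rw [show (φ x + ψ y₀ - ‖x - y₀‖ ^ 2 / 2) / ε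
          = ψ y₀ / ε + (φ x - ‖x - y₀‖ ^ 2 / 2) / ε from by ring, Real.exp_add]
      congr 1
      rw [hψ y₀, show -ε * Real.log (∫ x, f y₀ x ∂μ) / ε
          = -Real.log (∫ x, f y₀ x ∂μ) from by field_simp,
        Real.exp_neg, Real.exp_log (hFpos y₀)]
    simp_rw [he, mul_smul]
    rw [integral_smul]
  refine ⟨?_, by rw [hψint]⟩
  rw [hψint, show ψ = fun y => -ε * Real.log (∫ x, f y x ∂μ) from funext hψ]
  exact hvec ▸ hgrad
end
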